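/- Let B ≥ 2, let m ≥ 1, and let (θ_p, φ_p) ∈ [0,π]×[0,2π), p = 1,…,m, be sampling points such that all columns of the spherical-harmonic sensing matrix A ∈ ℂ^{m×B^2} are nonzero. Suppose there exists an integer k with 1 ≤ k ≤ B−1 such that 2kφ_i ≡ 2kφ_j (mod 2π) for all i, j ∈ {1,…,m}. Then the mutual coherence of A attains its maximum: μ(A) = 1. -/

import Mathlib

open scoped Real BigOperators

/-- Associated Legendre polynomial `P_l^k(x)` for integer order `k` (possibly negative). -/
noncomputable def assocLegendre (l : ℕ) (k : ℤ) (x : ℝ) : ℝ :=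
  ((-1 : ℝ) ^ k / (2 ^ l * (Nat.factorial l : ℝ))) * (1 - x ^ 2) ^ ((k : ℝ) / 2) *
    iteratedDeriv (k + (l : ℤ)).toNat (fun y : ℝ => (y ^ 2 - 1) ^ l) x

/-- Normalization factor of spherical harmonics. -/
noncomputable def shNormFactor (l : ℕ) (k : ℤ) : ℝ :=
  Real.sqrt ((2 * (l : ℝ) + 1) / (4 * Real.pi) *
    ((Nat.factorial ((l : ℤ) - k).toNat : ℝ) / (Nat.factorial ((l : ℤ) + k).toNat : ℝ)))

/-- Spherical harmonic `Y_l^k(θ,φ)`. -/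
noncomputable def sphericalHarmonic (l : ℕ) (k : ℤ) (θ φ : ℝ) : ℂ :=
  ((shNormFactor l k * assocLegendre l k (Real.cos θ) : ℝ) : ℂ) *
    Complex.exp (Complex.I * (k : ℂ) * (φ : ℂ))

/-- Jacobi polynomial `P_α^{(ξ,λ)}(x)`. -/
noncomputable def jacobiP (a ξ lam : ℕ) (x : ℝ) : ℝ :=
  ((-1 : ℝ) ^ a / (2 ^ a * (Nat.factorial a : ℝ))) * (1 - x) ^ (-(ξ : ℤ)) *
    (1 + x) ^ (-(lam : ℤ)) *
    iteratedDeriv a (fun y : ℝ => (1 - y) ^ ξ * (1 + y) ^ lam * (1 - y ^ 2) ^ a) x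

/-- The coefficient `γ = α!(α+ξ+λ)!/((α+ξ)!(α+λ)!)`. -/
noncomputable def jacobiGamma (a ξ lam : ℕ) : ℝ :=
  ((Nat.factorial a : ℝ) * (Nat.factorial (a + ξ + lam) : ℝ)) /
    ((Nat.factorial (a + ξ) : ℝ) * (Nat.factorial (a + lam) : ℝ))

/-- Wigner d-function `d_l^{k,n}(cos θ)` (as a function of `θ`). -/
noncomputable def wignerd (l : ℕ) (k n : ℤ) (θ : ℝ) : ℝ :=
  let ξ : ℕ := (k - n).natAbs
  let lam : ℕ := (k + n).natAbs
  let a : ℕ := l - (ξ + lam) / 2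
  let ω : ℝ := if k ≤ n then 1 else (-1 : ℝ) ^ (n - k)
  ω * Real.sqrt (jacobiGamma a ξ lam) * (Real.sin (θ / 2)) ^ ξ * (Real.cos (θ / 2)) ^ lam *
    jacobiP a ξ lam (Real.cos θ)

/-- Wigner D-function `D_l^{k,n}(θ,φ,χ)`. -/
noncomputable def wignerD (l : ℕ) (k n : ℤ) (θ φ χ : ℝ) : ℂ :=
  ((Real.sqrt ((2 * (l : ℝ) + 1) / (8 * Real.pi ^ 2)) : ℝ) : ℂ) *
    Complex.exp (-(Complex.I * (k : ℂ) * (φ : ℂ))) * ((wignerd l k n θ : ℝ) : ℂ) *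
    Complex.exp (-(Complex.I * (n : ℂ) * (χ : ℂ)))

/-- Column index set for the spherical-harmonic sensing matrix: pairs `(l,k)`,
`0 ≤ l ≤ B-1`, `-l ≤ k ≤ l`.  It has `B^2` elements. -/
abbrev SHIndex (B : ℕ) := Σ l : Fin B, ↥(Set.Icc (-(l.1 : ℤ)) (l.1 : ℤ))

/-- Column index set for the Wigner-D sensing matrix: triples `(l,k,n)`,
`0 ≤ l ≤ B-1`, `-l ≤ k,n ≤ l`.  It has `B(2B-1)(2B+1)/3` elements. -/
abbrev WDIndex (B : ℕ) :=
  Σ l : Fin B, ↥(Set.Icc (-(l.1 : ℤ)) (l.1 : ℤ)) × ↥(Set.Icc (-(l.1 : ℤ)) (l.1 : ℤ))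

/-- The spherical-harmonic sensing matrix. -/
noncomputable def shMatrix {m : ℕ} (B : ℕ) (θ φ : Fin m → ℝ) :
    Matrix (Fin m) (SHIndex B) ℂ :=
  fun p i => sphericalHarmonic i.1.1 i.2.1 (θ p) (φ p)

/-- The Wigner-D sensing matrix. -/
noncomputable def wdMatrix {m : ℕ} (B : ℕ) (θ φ χ : Fin m → ℝ) :
    Matrix (Fin m) (WDIndex B) ℂ :=
  fun p i => wignerD i.1.1 i.2.1.1 i.2.2.1 (θ p) (φ p) (χ p)

/-- Mutual coherence of a matrix: the supremum over pairs of distinct columns of the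
normalized absolute inner product. -/
noncomputable def mutualCoherence {m : ℕ} {ι : Type*} (A : Matrix (Fin m) ι ℂ) : ℝ :=
  sSup {x : ℝ | ∃ i j : ι, i ≠ j ∧
    x = ‖∑ p, (starRingEnd ℂ) (A p i) * A p j‖ /
        (Real.sqrt (∑ p, Complex.normSq (A p i)) * Real.sqrt (∑ p, Complex.normSq (A p j)))}



lemma iteratedDeriv_polyeval (p : Polynomial ℝ) (n : ℕ) :
    iteratedDeriv n (fun x => p.eval x) = fun x => (Polynomial.derivative^[n] p).eval x := by
  induction n with
  | zero => simp
  | succ n ih =>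
    rw [iteratedDeriv_succ, ih]
    funext x
    rw [Function.iterate_succ_apply']
    exact (Polynomial.derivative^[n] p).deriv

lemma iterate_derivative_top (p : Polynomial ℝ) (n : ℕ) (h : p.natDegree ≤ n) :
    Polynomial.derivative^[n] p = Polynomial.C ((n.factorial : ℝ) * p.coeff n) := by
  have h0 : (Polynomial.derivative^[n] p).natDegree ≤ 0 :=
    le_trans (Polynomial.natDegree_iterate_derivative p n) (by omega)
  rw [Polynomial.eq_C_of_natDegree_le_zero h0, Polynomial.coeff_iterate_derivative]
  simp [Nat.descFactorial_self, mul_comm]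

lemma key_iteratedDeriv (l : ℕ) (x : ℝ) :
    iteratedDeriv (2 * l) (fun y : ℝ => (y ^ 2 - 1) ^ l) x = ((2 * l).factorial : ℝ) := by
  have hfun : (fun y : ℝ => (y ^ 2 - 1) ^ l)
      = fun y => (((Polynomial.X ^ 2 - 1 : Polynomial ℝ)) ^ l).eval y := by
    funext y; simp
  have hm : ((Polynomial.X ^ 2 - 1 : Polynomial ℝ)) ^ l |>.Monic := by
    simpa using (Polynomial.monic_X_pow_sub_C (1 : ℝ) (two_ne_zero)).pow l
  have hdeg : (((Polynomial.X ^ 2 - 1 : Polynomial ℝ)) ^ l).natDegree = 2 * l := by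
    have h2 : (Polynomial.X ^ 2 - 1 : Polynomial ℝ).natDegree = 2 := by
      simpa using Polynomial.natDegree_X_pow_sub_C (n := 2) (r := (1 : ℝ))
    rw [Polynomial.natDegree_pow, h2, mul_comm]
  rw [hfun, iteratedDeriv_polyeval, iterate_derivative_top _ _ (le_of_eq hdeg)]
  rw [← hdeg, Polynomial.coeff_natDegree]
  simp [hm.leadingCoeff]

lemma rpow_sq_half (s : ℝ) (hs : 0 ≤ s) (l : ℕ) :
    (s ^ 2 : ℝ) ^ ((l : ℝ) / 2) = s ^ l := by
  rw [← Real.rpow_natCast s 2, ← Real.rpow_mul hs,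
    show ((2 : ℕ) : ℝ) * ((l : ℝ) / 2) = ((l : ℕ) : ℝ) by push_cast; ring]
  exact Real.rpow_natCast s l

lemma rpow_neg_half_mul (s : ℝ) (hs : 0 ≤ s) (l : ℕ) (hl : 1 ≤ l) :
    (s ^ 2 : ℝ) ^ (-(l : ℝ) / 2) * s ^ (2 * l) = s ^ l := by
  rcases eq_or_lt_of_le hs with h | h
  · rw [← h]
    rw [zero_pow (by omega : 2 * l ≠ 0), zero_pow (by omega : l ≠ 0), mul_zero]
  · rw [← Real.rpow_natCast s 2, ← Real.rpow_mul h.le, ← Real.rpow_natCast s (2 * l),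
      ← Real.rpow_natCast s l, ← Real.rpow_add h]
    congr 1
    push_cast
    ring

lemma assoc_pos (l : ℕ) (θ : ℝ) (hθ0 : 0 ≤ θ) (hθπ : θ ≤ Real.pi) :
    assocLegendre l (l : ℤ) (Real.cos θ) =
      ((-1 : ℝ) ^ l * (((2 * l).factorial : ℝ)) / (2 ^ l * (l.factorial : ℝ))) *
        Real.sin θ ^ l := by
  have hsin : 0 ≤ Real.sin θ := Real.sin_nonneg_of_nonneg_of_le_pi hθ0 hθπ
  have htn : ((l : ℤ) + (l : ℤ)).toNat = 2 * l := by omega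
  have h1 : (1 : ℝ) - Real.cos θ ^ 2 = Real.sin θ ^ 2 := by
    have := Real.sin_sq_add_cos_sq θ; linarith
  rw [assocLegendre, htn, key_iteratedDeriv, h1, zpow_natCast]
  rw [show (((l : ℤ) : ℝ)) = (l : ℝ) by push_cast; ring, rpow_sq_half _ hsin]
  ring

lemma assoc_neg (l : ℕ) (hl : 1 ≤ l) (θ : ℝ) (hθ0 : 0 ≤ θ) (hθπ : θ ≤ Real.pi) :
    assocLegendre l (-(l : ℤ)) (Real.cos θ) =
      (1 / (2 ^ l * (l.factorial : ℝ))) * Real.sin θ ^ l := by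
  have hsin : 0 ≤ Real.sin θ := Real.sin_nonneg_of_nonneg_of_le_pi hθ0 hθπ
  have htn : (-(l : ℤ) + (l : ℤ)).toNat = 0 := by omega
  have h1 : Real.cos θ ^ 2 - 1 = -(Real.sin θ ^ 2) := by
    have := Real.sin_sq_add_cos_sq θ; linarith
  have h2 : (1 : ℝ) - Real.cos θ ^ 2 = Real.sin θ ^ 2 := by
    have := Real.sin_sq_add_cos_sq θ; linarith
  rw [assocLegendre, htn, iteratedDeriv_zero, h1, h2]
  have hz : ((-1 : ℝ)) ^ (-(l : ℤ)) = (-1 : ℝ) ^ l := by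
    rw [zpow_neg, zpow_natCast]
    rcases Nat.even_or_odd l with he | ho
    · rw [he.neg_one_pow]; norm_num
    · rw [ho.neg_one_pow]; norm_num
  have hexp : (((-(l : ℤ) : ℤ)) : ℝ) = -(l : ℝ) := by push_cast; ring
  rw [hz, hexp]
  have hm : (-(Real.sin θ ^ 2)) ^ l = (-1 : ℝ) ^ l * Real.sin θ ^ (2 * l) := by
    rw [neg_pow, ← pow_mul]
  rw [hm]
  have key := rpow_neg_half_mul (Real.sin θ) hsin l hl
  have hsq : (-1 : ℝ) ^ l * (-1 : ℝ) ^ l = 1 := by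
    rw [← pow_add]; exact Even.neg_one_pow ⟨l, rfl⟩
  calc (-1:ℝ) ^ l / (2 ^ l * (l.factorial:ℝ)) * (Real.sin θ ^ 2) ^ (-(l:ℝ)/2) *
        ((-1:ℝ) ^ l * Real.sin θ ^ (2 * l))
      = ((-1:ℝ) ^ l * (-1:ℝ) ^ l) / (2 ^ l * (l.factorial:ℝ)) *
        ((Real.sin θ ^ 2) ^ (-(l:ℝ)/2) * Real.sin θ ^ (2 * l)) := by ring
    _ = (1 / (2 ^ l * (l.factorial : ℝ))) * Real.sin θ ^ l := by rw [hsq, key]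


/-- if the azimuth samples satisfy `2kφ_i ≡ 2kφ_j (mod 2π)` for some order
`1 ≤ k ≤ B-1`, then the spherical-harmonic sensing matrix has mutual coherence `1`. -/
theorem shMatrix_full_coherence (B m : ℕ) (hB : 2 ≤ B) (hm : 1 ≤ m)
    (θ φ : Fin m → ℝ)
    (hθ : ∀ p, θ p ∈ Set.Icc 0 Real.pi) (hφ : ∀ p, φ p ∈ Set.Ico 0 (2 * Real.pi))
    (hcols : ∀ i : SHIndex B, ∃ p, shMatrix B θ φ p i ≠ 0)
    (k : ℤ) (hk₁ : 1 ≤ k) (hk₂ : k ≤ (B : ℤ) - 1)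
    (hmod : ∀ i j : Fin m, ∃ t : ℤ, 2 * (k : ℝ) * φ i - 2 * (k : ℝ) * φ j = t * (2 * Real.pi)) :
    mutualCoherence (shMatrix B θ φ) = 1 := by
  classical
  obtain ⟨l, hkl⟩ : ∃ l : ℕ, (l : ℤ) = k := ⟨k.toNat, Int.toNat_of_nonneg (by omega)⟩
  have hl1 : 1 ≤ l := by omega
  have hlB : l < B := by omega
  have hmem₁ : (l : ℤ) ∈ Set.Icc (-(((⟨l, hlB⟩ : Fin B)).1 : ℤ)) (((⟨l, hlB⟩ : Fin B)).1 : ℤ) := by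
    simp only [Set.mem_Icc]; omega
  have hmem₂ : -(l : ℤ) ∈ Set.Icc (-(((⟨l, hlB⟩ : Fin B)).1 : ℤ)) (((⟨l, hlB⟩ : Fin B)).1 : ℤ) := by
    simp only [Set.mem_Icc]; omega
  let ci : SHIndex B := ⟨⟨l, hlB⟩, ⟨(l : ℤ), hmem₁⟩⟩
  let cj : SHIndex B := ⟨⟨l, hlB⟩, ⟨-(l : ℤ), hmem₂⟩⟩
  have hij : ci ≠ cj := by
    intro h
    have h2 : (l : ℤ) = -(l : ℤ) := congrArg (fun z : SHIndex B => (z.2.1 : ℤ)) h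
    omega
  set s : Fin m → ℝ := fun p => Real.sin (θ p) ^ l with hsdef
  have hs0 : ∀ p, 0 ≤ s p := fun p =>
    pow_nonneg (Real.sin_nonneg_of_nonneg_of_le_pi (hθ p).1 (hθ p).2) l
  set C₁ : ℝ := shNormFactor l (l : ℤ) *
      ((-1 : ℝ) ^ l * (((2 * l).factorial : ℝ)) / (2 ^ l * (l.factorial : ℝ))) with hC1
  set C₂ : ℝ := shNormFactor l (-(l : ℤ)) * (1 / (2 ^ l * (l.factorial : ℝ))) with hC2
  have hAi : ∀ p, shMatrix B θ φ p ci
      = ((C₁ * s p : ℝ) : ℂ) * Complex.exp (Complex.I * (l : ℂ) * (φ p : ℂ)) := by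
    intro p
    show sphericalHarmonic l (l : ℤ) (θ p) (φ p) = _
    rw [sphericalHarmonic, assoc_pos l (θ p) (hθ p).1 (hθ p).2,
      show (((l : ℤ) : ℤ) : ℂ) = (l : ℂ) from by push_cast; ring]
    congr 1
    exact congrArg Complex.ofReal (by simp only [hC1, hsdef]; ring)
  have hAj : ∀ p, shMatrix B θ φ p cj
      = ((C₂ * s p : ℝ) : ℂ) * Complex.exp (-(Complex.I * (l : ℂ) * (φ p : ℂ))) := by
    intro p
    show sphericalHarmonic l (-(l : ℤ)) (θ p) (φ p) = _
    rw [sphericalHarmonic, assoc_neg l hl1 (θ p) (hθ p).1 (hθ p).2,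
      show Complex.I * (((-(l : ℤ) : ℤ)) : ℂ) * ((φ p : ℝ) : ℂ)
        = -(Complex.I * (l : ℂ) * (φ p : ℂ)) from by push_cast; ring]
    congr 1
    exact congrArg Complex.ofReal (by simp only [hC2, hsdef]; ring)
  have hklR : ((l : ℕ) : ℝ) = (k : ℝ) := by rw [← hkl]; push_cast; ring
  set q0 : Fin m := ⟨0, hm⟩ with hq0
  set E : ℂ := Complex.exp (-(2 * Complex.I * (l : ℂ) * (φ q0 : ℂ))) with hE
  have hphase : ∀ p, Complex.exp (-(2 * Complex.I * (l : ℂ) * (φ p : ℂ))) = E := by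
    intro p
    obtain ⟨t, ht⟩ := hmod p q0
    rw [hE]
    refine Complex.exp_eq_exp_iff_exists_int.mpr ⟨-t, ?_⟩
    have ht' : 2 * (l : ℝ) * φ p - 2 * (l : ℝ) * φ q0 = t * (2 * Real.pi) := by
      rw [hklR]; exact ht
    have htC : 2 * (l : ℂ) * (φ p : ℂ) - 2 * (l : ℂ) * (φ q0 : ℂ)
        = (t : ℂ) * (2 * (Real.pi : ℂ)) := by exact_mod_cast congrArg (fun r : ℝ => (r : ℂ)) ht'
    push_cast
    push_cast at htC
    linear_combination (-Complex.I) * htC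
  obtain ⟨p₁, hp₁⟩ := hcols ci
  rw [hAi p₁] at hp₁
  have h1 : C₁ * s p₁ ≠ 0 := by
    intro h; exact hp₁ (by rw [h]; simp)
  have hC₁ : C₁ ≠ 0 := fun h => h1 (by rw [h]; ring)
  have hsp₁ : s p₁ ≠ 0 := fun h => h1 (by rw [h]; ring)
  obtain ⟨p₂, hp₂⟩ := hcols cj
  rw [hAj p₂] at hp₂
  have h2' : C₂ * s p₂ ≠ 0 := by
    intro h; exact hp₂ (by rw [h]; simp)
  have hC₂ : C₂ ≠ 0 := fun h => h2' (by rw [h]; ring)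
  set T : ℝ := ∑ p, s p ^ 2 with hT
  have hT0 : 0 < T := by
    refine Finset.sum_pos' (fun p _ => sq_nonneg _) ⟨p₁, Finset.mem_univ _, ?_⟩
    positivity
  have hnum : (∑ p, (starRingEnd ℂ) (shMatrix B θ φ p ci) * shMatrix B θ φ p cj)
      = ((C₁ * C₂ * T : ℝ) : ℂ) * E := by
    have hterm : ∀ p, (starRingEnd ℂ) (shMatrix B θ φ p ci) * shMatrix B θ φ p cj
        = ((C₁ * C₂ * s p ^ 2 : ℝ) : ℂ) * E := by
      intro p
      rw [hAi p, hAj p, ← hphase p, map_mul, Complex.conj_ofReal, ← Complex.exp_conj]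
      have hconj : (starRingEnd ℂ) (Complex.I * (l : ℂ) * (φ p : ℂ))
          = -(Complex.I * (l : ℂ) * (φ p : ℂ)) := by
        simp [map_mul, Complex.conj_I, Complex.conj_ofReal]
      rw [hconj]
      have hee : Complex.exp (-(Complex.I * (l : ℂ) * (φ p : ℂ)))
            * Complex.exp (-(Complex.I * (l : ℂ) * (φ p : ℂ)))
          = Complex.exp (-(2 * Complex.I * (l : ℂ) * (φ p : ℂ))) := by
        rw [← Complex.exp_add]; congr 1; ring
      rw [← hee]
      push_cast
      ring
    rw [Finset.sum_congr rfl fun p _ => hterm p, ← Finset.sum_mul]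
    congr 1
    rw [hT, Finset.mul_sum]
    push_cast
    ring
  have habsE : ‖E‖ = 1 := by
    rw [hE, Complex.norm_exp]
    norm_num
  have hexpabs : ∀ z : ℂ, z.re = 0 → Complex.normSq (Complex.exp z) = 1 := by
    intro z hz
    rw [Complex.normSq_eq_norm_sq, Complex.norm_exp, hz, Real.exp_zero]
    norm_num
  have hnormi : (∑ p, Complex.normSq (shMatrix B θ φ p ci)) = C₁ ^ 2 * T := by
    have hterm : ∀ p, Complex.normSq (shMatrix B θ φ p ci) = C₁ ^ 2 * s p ^ 2 := by
      intro p
      rw [hAi p, Complex.normSq_mul, Complex.normSq_ofReal, hexpabs _ (by simp)]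
      ring
    rw [Finset.sum_congr rfl fun p _ => hterm p, hT, Finset.mul_sum]
  have hnormj : (∑ p, Complex.normSq (shMatrix B θ φ p cj)) = C₂ ^ 2 * T := by
    have hterm : ∀ p, Complex.normSq (shMatrix B θ φ p cj) = C₂ ^ 2 * s p ^ 2 := by
      intro p
      rw [hAj p, Complex.normSq_mul, Complex.normSq_ofReal, hexpabs _ (by simp)]
      ring
    rw [Finset.sum_congr rfl fun p _ => hterm p, hT, Finset.mul_sum]
  have hratio : ‖∑ p, (starRingEnd ℂ) (shMatrix B θ φ p ci) * shMatrix B θ φ p cj‖ /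
      (Real.sqrt (∑ p, Complex.normSq (shMatrix B θ φ p ci)) *
        Real.sqrt (∑ p, Complex.normSq (shMatrix B θ φ p cj))) = 1 := by
    rw [hnum, hnormi, hnormj, norm_mul, habsE, mul_one, Complex.norm_real, Real.norm_eq_abs,
      Real.sqrt_mul (sq_nonneg C₁), Real.sqrt_mul (sq_nonneg C₂),
      Real.sqrt_sq_eq_abs, Real.sqrt_sq_eq_abs]
    have hden : 0 < |C₁| * Real.sqrt T * (|C₂| * Real.sqrt T) :=
      mul_pos (mul_pos (abs_pos.mpr hC₁) (Real.sqrt_pos.mpr hT0))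
        (mul_pos (abs_pos.mpr hC₂) (Real.sqrt_pos.mpr hT0))
    rw [div_eq_one_iff_eq (ne_of_gt hden)]
    rw [abs_mul, abs_mul, abs_of_nonneg hT0.le,
      show |C₁| * Real.sqrt T * (|C₂| * Real.sqrt T)
          = |C₁| * |C₂| * (Real.sqrt T * Real.sqrt T) from by ring,
      Real.mul_self_sqrt hT0.le]
  have hub : ∀ x ∈ {x : ℝ | ∃ a b : SHIndex B, a ≠ b ∧
      x = ‖∑ p, (starRingEnd ℂ) (shMatrix B θ φ p a) * shMatrix B θ φ p b‖ /
        (Real.sqrt (∑ p, Complex.normSq (shMatrix B θ φ p a)) *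
          Real.sqrt (∑ p, Complex.normSq (shMatrix B θ φ p b)))}, x ≤ 1 := by
    rintro x ⟨a, b, -, rfl⟩
    let u : EuclideanSpace ℂ (Fin m) := WithLp.toLp 2 (fun p => shMatrix B θ φ p a)
    let v : EuclideanSpace ℂ (Fin m) := WithLp.toLp 2 (fun p => shMatrix B θ φ p b)
    have key := norm_inner_le_norm (𝕜 := ℂ) u v
    have h1 : ‖∑ p, (starRingEnd ℂ) (shMatrix B θ φ p a) * shMatrix B θ φ p b‖
        = ‖(inner ℂ u v : ℂ)‖ := by
      rw [PiLp.inner_apply]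
      congr 1
      exact Finset.sum_congr rfl fun p _ => by simp [u, v, RCLike.inner_apply, mul_comm]
    have h2 : Real.sqrt (∑ p, Complex.normSq (shMatrix B θ φ p a)) = ‖u‖ := by
      rw [EuclideanSpace.norm_eq]
      congr 1
      refine Finset.sum_congr rfl fun p _ => ?_
      rw [show u p = shMatrix B θ φ p a from rfl, Complex.normSq_eq_norm_sq]
    have h3 : Real.sqrt (∑ p, Complex.normSq (shMatrix B θ φ p b)) = ‖v‖ := by
      rw [EuclideanSpace.norm_eq]
      congr 1
      refine Finset.sum_congr rfl fun p _ => ?_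
      rw [show v p = shMatrix B θ φ p b from rfl, Complex.normSq_eq_norm_sq]
    rw [h1, h2, h3]
    exact div_le_one_of_le₀ key (mul_nonneg (norm_nonneg _) (norm_nonneg _))
  have h1mem : (1 : ℝ) ∈ {x : ℝ | ∃ a b : SHIndex B, a ≠ b ∧
      x = ‖∑ p, (starRingEnd ℂ) (shMatrix B θ φ p a) * shMatrix B θ φ p b‖ /
        (Real.sqrt (∑ p, Complex.normSq (shMatrix B θ φ p a)) *
          Real.sqrt (∑ p, Complex.normSq (shMatrix B θ φ p b)))} :=
    ⟨ci, cj, hij, hratio.symm⟩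
  unfold mutualCoherence
  exact le_antisymm (csSup_le ⟨1, h1mem⟩ hub) (le_csSup ⟨1, fun x hx => hub x hx⟩ h1mem)
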